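/- Let M be a local Moufang set with basis (0,∞) and fixed μ-map τ, and let x be a unit. Then μ_{xτ} = μ_{−x}^τ (conjugation), i.e. the μ-map of the image xτ equals the conjugate by τ of the inverse μ-map μ_x^{-1} = μ_{−x}. -/

import Mathlib

/-!
Local Moufang sets, following E. Rijcken, "Local Moufang sets".
A local Moufang set is a set `X` with an equivalence relation (a `Setoid`)
having more than 2 classes, together with root groups `U x` of
equivalence-preserving permutations, satisfying (LM0), (LM1), (LM1'), (LM2).
We use left actions; the paper's right-composition word `a₁a₂⋯aₙ` corresponds
to our product `aₙ * ⋯ * a₁`, and the paper's conjugation `g^h = h⁻¹gh`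
corresponds to `h * g * h⁻¹` (i.e. `MulAut.conj h g`).
-/

variable {X : Type*}

/-- A permutation of `X` preserves the equivalence relation `r`. -/
def PreservesRel (r : Setoid X) (g : Equiv.Perm X) : Prop :=
  ∀ a b : X, r.r a b ↔ r.r (g a) (g b)

/-- A local pre-Moufang set: axioms (LM0), (LM1), (LM1'). -/
structure IsLocalPreMoufangSet (r : Setoid X) (U : X → Subgroup (Equiv.Perm X)) : Prop where
  /-- `X` has more than two equivalence classes. -/
  big : ∃ a b c : X, ¬ r.r a b ∧ ¬ r.r a c ∧ ¬ r.r b c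
  /-- root groups consist of equivalence-preserving permutations -/
  preserves : ∀ x : X, ∀ g ∈ U x, PreservesRel r g
  /-- (LM0): if `x ∼ y` then the induced actions of `U x` and `U y` on the quotient agree -/
  lm0 : ∀ x y : X, r.r x y → ∀ g ∈ U x, ∃ h ∈ U y, ∀ a : X, r.r (g a) (h a)
  /-- (LM1): `U x` fixes `x` ... -/
  fixes : ∀ x : X, ∀ g ∈ U x, g x = x
  /-- (LM1): ... and acts sharply transitively on the complement of the class of `x` -/
  lm1 : ∀ x a b : X, ¬ r.r a x → ¬ r.r b x → ∃! g : Equiv.Perm X, g ∈ U x ∧ g a = b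
  /-- (LM1'): the induced action on the quotient is transitive away from the class of `x` ... -/
  lm1'_trans : ∀ x a b : X, ¬ r.r a x → ¬ r.r b x → ∃ g ∈ U x, r.r (g a) b
  /-- (LM1'): ... and sharply so -/
  lm1'_sharp : ∀ x : X, ∀ g ∈ U x, ∀ h ∈ U x, ∀ a : X, ¬ r.r a x →
    r.r (g a) (h a) → ∀ b : X, r.r (g b) (h b)

/-- A local Moufang set: a local pre-Moufang set satisfying (LM2). -/
structure IsLocalMoufangSet (r : Setoid X) (U : X → Subgroup (Equiv.Perm X))
    extends IsLocalPreMoufangSet r U : Prop where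
  /-- (LM2): `U x ^ g = U (x g)` for all `g` in the little projective group `⟨U y : y⟩` -/
  lm2 : ∀ x : X, ∀ g ∈ (⨆ y : X, U y), (U x).map (MulAut.conj g).toMonoidHom = U (g x)

/-- `μ` is the μ-map of the point `x` w.r.t. the basis `(o, i) = (0, ∞)`:
it lies in the double coset `U 0 · α_x · U 0` (where `α_x` is the unique element
of `U ∞` with `0 · α_x = x`) and interchanges `0` and `∞`. -/
def IsMuMap (U : X → Subgroup (Equiv.Perm X)) (o i x : X) (μ : Equiv.Perm X) : Prop :=
  ∃ a : Equiv.Perm X, a ∈ U i ∧ a o = x ∧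
    (∃ u ∈ U o, ∃ v ∈ U o, μ = u * a * v) ∧ μ o = i ∧ μ i = o

/-- The Hua subgroup `H = ⟨μ_x μ_y : x, y units⟩` w.r.t. the basis `(o, i) = (0, ∞)`. -/
def HuaSubgroup (r : Setoid X) (U : X → Subgroup (Equiv.Perm X)) (o i : X) :
    Subgroup (Equiv.Perm X) :=
  Subgroup.closure {g | ∃ x y μx μy, (¬ r.r x o ∧ ¬ r.r x i) ∧ (¬ r.r y o ∧ ¬ r.r y i) ∧
    IsMuMap U o i x μx ∧ IsMuMap U o i y μy ∧ g = μx * μy}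

/-- for a unit `x` and a μ-map `τ`, one has `μ_x⁻¹ = μ_{-x}` and
`μ_{xτ} = μ_{-x}^τ`.  Here `a = α_x`, so `-x = a⁻¹ o`; the paper's conjugation
`g^τ = τ⁻¹ g τ` (right actions) corresponds to `τ * g * τ⁻¹` for left actions. -/
theorem statement5 (r : Setoid X) (U : X → Subgroup (Equiv.Perm X))
    (hM : IsLocalMoufangSet r U) (o i : X) (hoi : ¬ r.r o i)
    (τ : Equiv.Perm X) (hτ : ∃ e, ¬ r.r e o ∧ ¬ r.r e i ∧ IsMuMap U o i e τ)
    (x : X) (hxo : ¬ r.r x o) (hxi : ¬ r.r x i)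
    (a : Equiv.Perm X) (haU : a ∈ U i) (hao : a o = x)
    (mx mnx mxt : Equiv.Perm X)
    (hmx : IsMuMap U o i x mx) (hmnx : IsMuMap U o i (a⁻¹ o) mnx)
    (hmxt : IsMuMap U o i (τ x) mxt) :
    mnx = mx⁻¹ ∧ mxt = τ * mnx * τ⁻¹ := by
  classical
  have hsymm : ∀ {p q : X}, r.r p q → r.r q p := fun h => r.iseqv.symm h
  have hio : ¬ r.r i o := fun h => hoi (hsymm h)
  have presMul : ∀ {f g : Equiv.Perm X}, PreservesRel r f → PreservesRel r g →
      PreservesRel r (f * g) := by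
    intro f g hf hg p q
    rw [Equiv.Perm.mul_apply, Equiv.Perm.mul_apply]
    exact (hg p q).trans (hf _ _)
  have sharp : ∀ (p : X) (g h : Equiv.Perm X), g ∈ U p → h ∈ U p →
      ∀ c : X, ¬ r.r c p → g c = h c → g = h := by
    intro p g h hg hh c hc he
    have hfix : g p = p := hM.fixes p g hg
    have hgc : ¬ r.r (g c) p := by
      intro h'
      apply hc
      have h2 := hM.preserves p g hg c p
      rw [hfix] at h2
      exact h2.mpr h'
    obtain ⟨w, -, hwu⟩ := hM.lm1 p c (g c) hc hgc
    exact (hwu g ⟨hg, rfl⟩).trans (hwu h ⟨hh, he.symm⟩).symm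
  have conjU : ∀ (g : Equiv.Perm X), g ∈ (⨆ y : X, U y) → ∀ (p : X) (k : Equiv.Perm X),
      k ∈ U p → g * k * g⁻¹ ∈ U (g p) := by
    intro g hg p k hk
    rw [← hM.lm2 p g hg]
    exact Subgroup.mem_map.mpr ⟨k, hk, rfl⟩
  -- unpack hmx
  obtain ⟨a', ha'U, ha'o, ⟨u, huU, v, hvU, hmxeq0⟩, hmxo, hmxi⟩ := hmx
  have ha' : a' = a := sharp i a' a ha'U haU o hoi (ha'o.trans hao.symm)
  have hmxeq : mx = u * a * v := by rw [hmxeq0, ha']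
  have hvo : v o = o := hM.fixes o v hvU
  have huo : u o = o := hM.fixes o u huU
  have hai : a i = i := hM.fixes i a haU
  have hux : u x = i := by
    have h0 : (u * a * v) o = i := by rw [← hmxeq]; exact hmxo
    simp only [Equiv.Perm.mul_apply] at h0
    rwa [hvo, hao] at h0
  have hvi : v i = a⁻¹ o := by
    have h0 : (u * a * v) i = o := by rw [← hmxeq]; exact hmxi
    simp only [Equiv.Perm.mul_apply] at h0
    have h1 : a (v i) = o := by
      apply u.injective
      rw [h0, huo]
    rw [← h1, Equiv.Perm.inv_eq_iff_eq.mpr rfl]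
  have hnxo : ¬ r.r (a⁻¹ o) o := by
    intro h
    have h2 := (hM.preserves i a haU (a⁻¹ o) o).mp h
    rw [Equiv.Perm.eq_inv_iff_eq.mp rfl, hao] at h2
    exact hxo (hsymm h2)
  -- part 1 : mnx = mx⁻¹
  obtain ⟨a₃, ha₃U, ha₃o, ⟨u₃, hu₃U, v₃, hv₃U, hmnxeq⟩, hmnxo, hmnxi⟩ := hmnx
  have ha₃ : a₃ = a⁻¹ := sharp i a₃ a⁻¹ ha₃U ((U i).inv_mem haU) o hoi ha₃o
  have hv₃o : v₃ o = o := hM.fixes o v₃ hv₃U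
  have hu₃o : u₃ o = o := hM.fixes o u₃ hu₃U
  have hu₃nx : u₃ (a⁻¹ o) = i := by
    have h0 : (u₃ * a₃ * v₃) o = i := by rw [← hmnxeq]; exact hmnxo
    simp only [Equiv.Perm.mul_apply] at h0
    rwa [hv₃o, ha₃o] at h0
  have hvinx : v⁻¹ (a⁻¹ o) = i := by rw [← hvi, Equiv.Perm.inv_eq_iff_eq.mpr rfl]
  have hu₃v : u₃ = v⁻¹ :=
    sharp o u₃ v⁻¹ hu₃U ((U o).inv_mem hvU) (a⁻¹ o) hnxo (hu₃nx.trans hvinx.symm)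
  have hv₃x : v₃ i = x := by
    have h0 : (u₃ * a₃ * v₃) i = o := by rw [← hmnxeq]; exact hmnxi
    simp only [Equiv.Perm.mul_apply] at h0
    have h1 : a₃ (v₃ i) = o := by
      apply u₃.injective
      rw [h0, hu₃o]
    rw [ha₃] at h1
    have h2 := congrArg a h1
    rwa [Equiv.Perm.eq_inv_iff_eq.mp rfl, hao] at h2
  have huix : u⁻¹ i = x := by rw [← hux, Equiv.Perm.inv_eq_iff_eq.mpr rfl]
  have hv₃u : v₃ = u⁻¹ :=
    sharp o v₃ u⁻¹ hv₃U ((U o).inv_mem huU) i hio (hv₃x.trans huix.symm)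
  have part1 : mnx = mx⁻¹ := by
    rw [hmnxeq, hmxeq, ha₃, hu₃v, hv₃u]
    group
  -- part 2
  obtain ⟨e, heo, hei, ⟨a₀, ha₀U, ha₀o, ⟨u₀, hu₀U, v₀, hv₀U, hτeq⟩, hτo, hτi⟩⟩ := hτ
  have hτS : τ ∈ ⨆ y : X, U y := by
    rw [hτeq]
    exact mul_mem (mul_mem (le_iSup U o hu₀U) (le_iSup U i ha₀U)) (le_iSup U o hv₀U)
  have hτpres : PreservesRel r τ := by
    rw [hτeq]
    exact presMul (presMul (hM.preserves o u₀ hu₀U) (hM.preserves i a₀ ha₀U))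
      (hM.preserves o v₀ hv₀U)
  have hτio : τ⁻¹ o = i := by rw [← hτi, Equiv.Perm.inv_eq_iff_eq.mpr rfl]
  have hτii : τ⁻¹ i = o := by rw [← hτo, Equiv.Perm.inv_eq_iff_eq.mpr rfl]
  have hτxo : ¬ r.r (τ x) o := by
    intro h
    rw [← hτi] at h
    exact hxi ((hτpres x i).mpr h)
  have hg₀S : u * a ∈ ⨆ y : X, U y := mul_mem (le_iSup U o huU) (le_iSup U i haU)
  have hg₀o : (u * a) o = i := by rw [Equiv.Perm.mul_apply, hao, hux]
  have hc₁U : (u * a) * v * (u * a)⁻¹ ∈ U i := by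
    have h := conjU (u * a) hg₀S o v hvU
    rwa [hg₀o] at h
  have hPU : τ * a⁻¹ * τ⁻¹ ∈ U o := by
    have h := conjU τ hτS i a⁻¹ ((U i).inv_mem haU)
    rwa [hτi] at h
  have hdU : τ * u⁻¹ * τ⁻¹ ∈ U i := by
    have h := conjU τ hτS o u⁻¹ ((U o).inv_mem huU)
    rwa [hτo] at h
  have hQU : τ * ((u * a) * v * (u * a)⁻¹)⁻¹ * τ⁻¹ ∈ U o := by
    have h := conjU τ hτS i ((u * a) * v * (u * a)⁻¹)⁻¹ ((U i).inv_mem hc₁U)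
    rwa [hτi] at h
  have hdo : (τ * u⁻¹ * τ⁻¹) o = τ x := by
    simp only [Equiv.Perm.mul_apply]
    rw [hτio, huix]
  -- unpack hmxt
  obtain ⟨a'', ha''U, ha''o, ⟨u', hu'U, v', hv'U, hmxteq⟩, hmxto, hmxti⟩ := hmxt
  have ha''d : a'' = τ * u⁻¹ * τ⁻¹ :=
    sharp i a'' _ ha''U hdU o hoi (ha''o.trans hdo.symm)
  have hv'o : v' o = o := hM.fixes o v' hv'U
  have hu'o : u' o = o := hM.fixes o u' hu'U
  have hu'τx : u' (τ x) = i := by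
    have h0 : (u' * a'' * v') o = i := by rw [← hmxteq]; exact hmxto
    simp only [Equiv.Perm.mul_apply] at h0
    rwa [hv'o, ha''o] at h0
  have hPτx : (τ * a⁻¹ * τ⁻¹) (τ x) = i := by
    simp only [Equiv.Perm.mul_apply]
    rw [Equiv.Perm.inv_eq_iff_eq.mpr rfl]
    have h1 : a⁻¹ x = o := by rw [← hao, Equiv.Perm.inv_eq_iff_eq.mpr rfl]
    rw [h1, hτo]
  have hu'P : u' = τ * a⁻¹ * τ⁻¹ :=
    sharp o u' _ hu'U hPU (τ x) hτxo (hu'τx.trans hPτx.symm)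
  have hv'i : v' i = a''⁻¹ o := by
    have h0 : (u' * a'' * v') i = o := by rw [← hmxteq]; exact hmxti
    simp only [Equiv.Perm.mul_apply] at h0
    have h1 : a'' (v' i) = o := by
      apply u'.injective
      rw [h0, hu'o]
    rw [← h1, Equiv.Perm.inv_eq_iff_eq.mpr rfl]
  have huio : u⁻¹ o = o := by
    apply u.injective
    rw [Equiv.Perm.eq_inv_iff_eq.mp rfl, huo]
  have hQi : (τ * ((u * a) * v * (u * a)⁻¹)⁻¹ * τ⁻¹) i = τ (u i) := by
    have hcinv : ((u * a) * v * (u * a)⁻¹)⁻¹ = u * a * v⁻¹ * a⁻¹ * u⁻¹ := by group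
    rw [hcinv]
    simp only [Equiv.Perm.mul_apply]
    rw [hτii, huio, hvinx, hai]
  have hQio : a''⁻¹ o = (τ * ((u * a) * v * (u * a)⁻¹)⁻¹ * τ⁻¹) i := by
    rw [hQi, ha''d]
    have h1 : (τ * u⁻¹ * τ⁻¹)⁻¹ = τ * u * τ⁻¹ := by group
    rw [h1]
    simp only [Equiv.Perm.mul_apply]
    rw [hτio]
  have hv'Q : v' = τ * ((u * a) * v * (u * a)⁻¹)⁻¹ * τ⁻¹ :=
    sharp o v' _ hv'U hQU i hio (hv'i.trans hQio)
  refine ⟨part1, ?_⟩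
  rw [hmxteq, ha''d, hu'P, hv'Q, part1, hmxeq]
  group
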